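/- A formal Laurent series g over a field k of characteristic zero lies in the image of the logarithmic derivative LD: R* → R if and only if either W(g) ≥ 0, or W(g) = -1 and res(g) is an integer (i.e., an integer multiple of 1 in k). -/

import Mathlib

set_option linter.unusedSectionVars false
open HahnSeries PowerSeries

variable {k : Type} [Field k] [CharZero k]

lemma coe_coeff (v : PowerSeries k) (m : ℤ) :
    (HahnSeries.ofPowerSeries ℤ k v).coeff m =
      if 0 ≤ m then PowerSeries.coeff m.toNat v else 0 := by
  split_ifs with h
  · rw [← Int.toNat_of_nonneg h, LaurentSeries.coeff_coe_powerSeries, Int.toNat_natCast]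
  · rw [ofPowerSeries_apply, embDomain_notin_range]
    rintro ⟨n, hn⟩
    simp at hn
    omega

noncomputable def solA (h : PowerSeries k) : ℕ → k
  | 0 => 1
  | (m+1) => (∑ i ∈ Finset.range (m+1), (PowerSeries.coeff i h) * solA h (m - i)) / (m+1)

lemma solA_succ (h : PowerSeries k) (m : ℕ) :
    solA h (m+1) = (∑ i ∈ Finset.range (m+1), (PowerSeries.coeff i h) * solA h (m - i)) / (m+1) := by
  rw [solA]

noncomputable def solV (h : PowerSeries k) : PowerSeries k := PowerSeries.mk (solA h)

lemma solV_deriv (h : PowerSeries k) (n : ℕ) :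
    ((n:k)+1) * PowerSeries.coeff (n+1) (solV h) = PowerSeries.coeff n (h * solV h) := by
  rw [solV, PowerSeries.coeff_mk, solA_succ, PowerSeries.coeff_mul]
  simp only [PowerSeries.coeff_mk]
  rw [Finset.Nat.sum_antidiagonal_eq_sum_range_succ (fun i j => PowerSeries.coeff i h * solA h j)]
  have hne : ((n:k)+1) ≠ 0 := Nat.cast_add_one_ne_zero n
  field_simp

lemma hsingle_mul (x : LaurentSeries k) (c : k) (e m : ℤ) :
    (HahnSeries.single e c * x).coeff m = c * x.coeff (m - e) := by
  conv_lhs => rw [show m = (m - e) + e by ring, HahnSeries.coeff_single_mul_add]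

lemma keyD (d : ℤ) (v w : PowerSeries k)
    (hw : ∀ n : ℕ, ((n:k)+1) * PowerSeries.coeff (n+1) v = PowerSeries.coeff n w) :
    LaurentSeries.derivative k (HahnSeries.single d 1 * (HahnSeries.ofPowerSeries ℤ k v)) =
      HahnSeries.single (d-1) ((d:k)) * HahnSeries.ofPowerSeries ℤ k v
        + HahnSeries.single d 1 * HahnSeries.ofPowerSeries ℤ k w := by
  ext n
  rw [LaurentSeries.derivative_apply, LaurentSeries.hasseDeriv_coeff, HahnSeries.coeff_add,
    hsingle_mul, hsingle_mul, hsingle_mul, coe_coeff, coe_coeff, coe_coeff]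
  have hrc : Ring.choose ((n : ℤ) + (1:ℕ)) 1 = n + 1 := by
    rw [Nat.cast_one, Ring.choose_one_right]
  rw [hrc, zsmul_eq_mul, one_mul]
  simp only [Nat.cast_one]
  by_cases hj : 0 ≤ n + 1 - d
  · by_cases hj0 : n + 1 - d = 0
    · rw [if_pos hj, if_pos (by omega : (0:ℤ) ≤ n - (d-1)), if_neg (by omega : ¬ (0:ℤ) ≤ n - d)]
      have h1 : (n + 1 - d).toNat = 0 := by omega
      have h2 : (n - (d-1)).toNat = 0 := by omega
      have h3 : ((n:ℤ) + 1 : ℤ) = d := by omega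
      rw [h1, h2, mul_zero, add_zero]
      rw [show (((n:ℤ)+1 : ℤ) : k) = ((d : ℤ) : k) from congrArg (fun z : ℤ => (z : k)) h3]
    · rw [if_pos hj, if_pos (by omega : (0:ℤ) ≤ n - (d-1)), if_pos (by omega : (0:ℤ) ≤ n - d)]
      rw [one_mul, ← hw ((n - d).toNat)]
      have h1 : (n - d).toNat + 1 = (n + 1 - d).toNat := by omega
      have h2 : (n - (d-1)).toNat = (n + 1 - d).toNat := by omega
      rw [h1, h2]
      have h3 : (((n:ℤ) + 1 : ℤ) : k) = ((d : ℤ) : k) + (((n-d).toNat : ℕ) : k) + 1 := by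
        have : ((n:ℤ) + 1 : ℤ) = d + ((n-d).toNat : ℤ) + 1 := by omega
        exact_mod_cast congrArg (Int.cast : ℤ → k) this
      rw [h3]
      ring
  · rw [if_neg hj, if_neg (by omega : ¬ (0:ℤ) ≤ n - (d-1)), if_neg (by omega : ¬ (0:ℤ) ≤ n - d)]
    simp

lemma exists_sol (h : PowerSeries k) : ∃ v : PowerSeries k,
    PowerSeries.constantCoeff v = 1 ∧
    ∀ n : ℕ, ((n:k)+1) * PowerSeries.coeff (n+1) v = PowerSeries.coeff n (h * v) := by
  refine ⟨solV h, ?_, solV_deriv h⟩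
  rw [← PowerSeries.coeff_zero_eq_constantCoeff, solV, PowerSeries.coeff_mk, solA]


/-- A Laurent series `g` is a logarithmic derivative `u'/u` of some nonzero `u`
if and only if `W(g) ≥ 0`, or `W(g) = -1` and the residue of `g` is an integer.
(Here the order of the zero series is `0` by convention, so `g = 0` is covered by
the first alternative.) -/
theorem stmt12 {k : Type} [Field k] [CharZero k] (g : LaurentSeries k) :
    (∃ u : LaurentSeries k, u ≠ 0 ∧ LaurentSeries.derivative k u / u = g) ↔
      (0 ≤ g.order ∨ (g.order = -1 ∧ ∃ n : ℤ, g.coeff (-1) = (n : k))) := by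
  constructor
  · rintro ⟨u, hu, hg⟩
    set d := u.order with hd
    set v := u.powerSeriesPart with hv
    have hv0 : PowerSeries.constantCoeff v ≠ 0 := by
      have := (coeff_order_eq_zero.not.2 hu)
      simpa [hv, ← PowerSeries.coeff_zero_eq_constantCoeff] using this
    have hu' : u = HahnSeries.single d 1 * HahnSeries.ofPowerSeries ℤ k v :=
      (LaurentSeries.single_order_mul_powerSeriesPart u).symm
    obtain ⟨w, hw⟩ := (PowerSeries.isUnit_iff_constantCoeff.mpr hv0.isUnit).exists_right_inv
    set Dv : PowerSeries k := PowerSeries.mk fun m => ((m:k)+1) * PowerSeries.coeff (m+1) v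
      with hDv
    have hder : LaurentSeries.derivative k u =
        (HahnSeries.single (-1) ((d:k)) + HahnSeries.ofPowerSeries ℤ k (Dv * w)) * u := by
      rw [hu', keyD d v Dv (fun n => by simp [hDv])]
      have h1 : (HahnSeries.ofPowerSeries ℤ k) Dv
          = (HahnSeries.ofPowerSeries ℤ k) (Dv * w) * (HahnSeries.ofPowerSeries ℤ k) v := by
        rw [← map_mul, mul_assoc, mul_comm w v, hw, mul_one]
      have h2 : HahnSeries.single (-1:ℤ) ((d:k)) * (HahnSeries.single d 1 : LaurentSeries k)
          = HahnSeries.single (d-1) ((d:k)) := by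
        rw [single_mul_single, mul_one, show (-1:ℤ)+d = d - 1 by ring]
      rw [h1, add_mul, ← h2]
      ring
    set G := HahnSeries.single (-1:ℤ) ((d:k)) + HahnSeries.ofPowerSeries ℤ k (Dv * w) with hG
    have hgG : g = G := by
      rw [← hg, hder, mul_div_cancel_right₀ _ hu]
    have hGneg : ∀ m : ℤ, m < -1 → G.coeff m = 0 := by
      intro m hm
      rw [hG, HahnSeries.coeff_add, HahnSeries.coeff_single_of_ne (by omega), coe_coeff,
        if_neg (by omega), add_zero]
    have hGres : G.coeff (-1) = (d:k) := by
      rw [hG, HahnSeries.coeff_add, HahnSeries.coeff_single_same, coe_coeff,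
        if_neg (by omega), add_zero]
    by_cases hd0 : d = 0
    · left
      rw [hgG]
      by_cases hG0 : G = 0
      · rw [hG0, HahnSeries.order_zero]
      · by_contra hlt
        push_neg at hlt
        rcases lt_or_eq_of_le (by omega : G.order ≤ -1) with h | h
        · exact (coeff_order_eq_zero.not.2 hG0) (hGneg _ h)
        · exact (coeff_order_eq_zero.not.2 hG0) (by rw [h, hGres, hd0, Int.cast_zero])
    · right
      have hres : G.coeff (-1) ≠ 0 := by
        rw [hGres]; exact_mod_cast hd0
      have hG0 : G ≠ 0 := fun h => hres (by rw [h]; rfl)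
      have hle : G.order ≤ -1 := order_le_of_coeff_ne_zero hres
      have hord : G.order = -1 := by
        rcases lt_or_eq_of_le hle with h | h
        · exact absurd (hGneg _ h) ((coeff_order_eq_zero.not.2 hG0))
        · exact h
      exact ⟨by rw [hgG, hord], ⟨d, by rw [hgG, hGres]⟩⟩
  · rintro (hord | ⟨hord, n, hres⟩)
    · -- 0 ≤ order
      set h : PowerSeries k := PowerSeries.mk fun m : ℕ => g.coeff m with hh
      have hg : HahnSeries.ofPowerSeries ℤ k h = g := by
        ext m
        rw [coe_coeff]
        split_ifs with hm
        · rw [hh, PowerSeries.coeff_mk, Int.toNat_of_nonneg hm]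
        · exact (coeff_eq_zero_of_lt_order (by omega)).symm
      obtain ⟨v, hv1, hvd⟩ := exists_sol h
      have hvne : HahnSeries.ofPowerSeries ℤ k v ≠ 0 := by
        intro h0
        have : (HahnSeries.ofPowerSeries ℤ k v).coeff 0 = 0 := by rw [h0]; rfl
        rw [coe_coeff, if_pos le_rfl] at this
        simp [hv1] at this
      refine ⟨HahnSeries.ofPowerSeries ℤ k v, hvne, ?_⟩
      have hthis := keyD 0 v (h * v) hvd
      simp only [Int.cast_zero, zero_sub] at hthis
      rw [show (HahnSeries.single (0:ℤ) (1:k)) = 1 from rfl, one_mul] at hthis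
      rw [show HahnSeries.single (-1:ℤ) (0:k) = 0 from HahnSeries.single_eq_zero,
        zero_mul, zero_add, map_mul, hg] at hthis
      rw [hthis, one_mul, mul_div_cancel_right₀ _ hvne]
    · -- order = -1, residue an integer n
      set h : PowerSeries k := PowerSeries.mk fun m : ℕ => g.coeff m with hh
      have hg : g = HahnSeries.single (-1:ℤ) ((n:k)) + HahnSeries.ofPowerSeries ℤ k h := by
        ext m
        rw [HahnSeries.coeff_add, coe_coeff]
        rcases lt_trichotomy m (-1) with hm | hm | hm
        · rw [HahnSeries.coeff_single_of_ne (by omega), if_neg (by omega),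
            coeff_eq_zero_of_lt_order (by omega), add_zero]
        · subst hm
          rw [HahnSeries.coeff_single_same, if_neg (by omega), add_zero, hres]
        · rw [HahnSeries.coeff_single_of_ne (by omega), if_pos (by omega), zero_add,
            hh, PowerSeries.coeff_mk, Int.toNat_of_nonneg (by omega)]
      obtain ⟨v, hv1, hvd⟩ := exists_sol h
      have hvne : HahnSeries.ofPowerSeries ℤ k v ≠ 0 := by
        intro h0
        have : (HahnSeries.ofPowerSeries ℤ k v).coeff 0 = 0 := by rw [h0]; rfl
        rw [coe_coeff, if_pos le_rfl] at this
        simp [hv1] at this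
      refine ⟨HahnSeries.single (n:ℤ) 1 * HahnSeries.ofPowerSeries ℤ k v, ?_, ?_⟩
      · exact mul_ne_zero (HahnSeries.single_ne_zero one_ne_zero) hvne
      · have hkey := keyD n v (h * v) hvd
        rw [hkey]
        have hGu : HahnSeries.single ((n:ℤ)-1) ((n:ℤ):k) * HahnSeries.ofPowerSeries ℤ k v
            + HahnSeries.single (n:ℤ) 1 * HahnSeries.ofPowerSeries ℤ k (h * v)
            = g * (HahnSeries.single (n:ℤ) 1 * HahnSeries.ofPowerSeries ℤ k v) := by
          have h2 : HahnSeries.single (-1:ℤ) ((n:k)) * (HahnSeries.single (n:ℤ) 1 : LaurentSeries k)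
              = HahnSeries.single ((n:ℤ)-1) ((n:k)) := by
            rw [single_mul_single, mul_one, show (-1:ℤ)+n = n - 1 by ring]
          rw [hg, map_mul, ← h2]
          ring
        rw [hGu, mul_div_cancel_right₀ _
          (mul_ne_zero (HahnSeries.single_ne_zero one_ne_zero) hvne)]
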